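/- Define J_GEN : Y → (linear maps Y → Y) by J_GEN(z,w,e)(a,b,c) := (J_A(z)a, −D_skw b, 0). If J_A satisfies the Jacobi identity, i.e. for all z ∈ Z and all μ₁, μ₂, μ₃ ∈ Z, ⟨μ₁, (DJ_A(z)[J_A(z)μ₂])μ₃⟩ + ⟨μ₂, (DJ_A(z)[J_A(z)μ₃])μ₁⟩ + ⟨μ₃, (DJ_A(z)[J_A(z)μ₁])μ₂⟩ = 0, where DJ_A(z)[v] denotes the derivative of the map z ↦ J_A(z) at z in direction v, then each J_GEN(y) is skew-adjoint and J_GEN satisfies the Jacobi identity on Y: for all y ∈ Y and all μ₁, μ₂, μ₃ ∈ Y, ⟨μ₁, (DJ_GEN(y)[J_GEN(y)μ₂])μ₃⟩ + ⟨μ₂, (DJ_GEN(y)[J_GEN(y)μ₃])μ₁⟩ + ⟨μ₃, (DJ_GEN(y)[J_GEN(y)μ₁])μ₂⟩ = 0. -/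

import Mathlib

set_option maxHeartbeats 1000000


open RealInnerProductSpace

/-- On `Y = Z × W × ℝ` define
`J_GEN(z,w,e)(a,b,c) := (J_A(z)a, −D_skw b, 0)`.  If `J_A` satisfies the Jacobi
identity, then each `J_GEN(y)` is skew-adjoint (for the product inner product
`⟨(a,b,c),(a',b',c')⟩ = ⟨a,a'⟩ + ⟨b,b'⟩ + c·c'` on `Y`) and `J_GEN` satisfies the
Jacobi identity on `Y`. -/
theorem generic_poisson_operator_jacobi
    {Z : Type*} [NormedAddCommGroup Z] [InnerProductSpace ℝ Z] [FiniteDimensional ℝ Z]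
    {W : Type*} [NormedAddCommGroup W] [InnerProductSpace ℝ W] [FiniteDimensional ℝ W]
    (D : W →L[ℝ] W)
    (JA : Z → Z →L[ℝ] Z) (hJAsmooth : ContDiff ℝ 1 JA)
    (hJAskew : ∀ z : Z, ContinuousLinearMap.adjoint (JA z) = -(JA z))
    (JG : Z × W × ℝ → (Z × W × ℝ →L[ℝ] Z × W × ℝ))
    (hJG : ∀ (y v : Z × W × ℝ),
      JG y v = (JA y.1 v.1,
        -((((1 : ℝ) / 2) • (D - ContinuousLinearMap.adjoint D)) v.2.1), (0 : ℝ)))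
    (hJacobiA : ∀ (z : Z) (μ₁ μ₂ μ₃ : Z),
      ⟪μ₁, (fderiv ℝ JA z ((JA z) μ₂)) μ₃⟫
        + ⟪μ₂, (fderiv ℝ JA z ((JA z) μ₃)) μ₁⟫
        + ⟪μ₃, (fderiv ℝ JA z ((JA z) μ₁)) μ₂⟫ = 0) :
    ∀ y : Z × W × ℝ,
      -- J_GEN(y) is skew-adjoint for the product inner product on Y
      (∀ u v : Z × W × ℝ,
        ⟪(JG y u).1, v.1⟫ + ⟪(JG y u).2.1, v.2.1⟫ + (JG y u).2.2 * v.2.2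
          = -(⟪u.1, (JG y v).1⟫ + ⟪u.2.1, (JG y v).2.1⟫ + u.2.2 * (JG y v).2.2)) ∧
      -- Jacobi identity for J_GEN on Y
      (∀ μ₁ μ₂ μ₃ : Z × W × ℝ,
        (⟪μ₁.1, ((fderiv ℝ JG y (JG y μ₂)) μ₃).1⟫
            + ⟪μ₁.2.1, ((fderiv ℝ JG y (JG y μ₂)) μ₃).2.1⟫
            + μ₁.2.2 * ((fderiv ℝ JG y (JG y μ₂)) μ₃).2.2)
          + (⟪μ₂.1, ((fderiv ℝ JG y (JG y μ₃)) μ₁).1⟫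
            + ⟪μ₂.2.1, ((fderiv ℝ JG y (JG y μ₃)) μ₁).2.1⟫
            + μ₂.2.2 * ((fderiv ℝ JG y (JG y μ₃)) μ₁).2.2)
          + (⟪μ₃.1, ((fderiv ℝ JG y (JG y μ₁)) μ₂).1⟫
            + ⟪μ₃.2.1, ((fderiv ℝ JG y (JG y μ₁)) μ₂).2.1⟫
            + μ₃.2.2 * ((fderiv ℝ JG y (JG y μ₁)) μ₂).2.2) = 0) := by
  intro y
  have hYdef : True := trivial
  set Dsq : W →L[ℝ] W := ((1 : ℝ) / 2) • (D - ContinuousLinearMap.adjoint D) with hDsq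
  -- the linear embedding T ↦ (v ↦ (T v.1, 0, 0))
  set L : (Z →L[ℝ] Z) →L[ℝ] ((Z × W × ℝ) →L[ℝ] (Z × W × ℝ)) :=
    ((ContinuousLinearMap.compL ℝ (Z × W × ℝ) Z (Z × W × ℝ) (ContinuousLinearMap.inl ℝ Z (W × ℝ))).comp
      ((ContinuousLinearMap.compL ℝ (Z × W × ℝ) Z Z).flip (ContinuousLinearMap.fst ℝ Z (W × ℝ))))
    with hL
  have hLapp : ∀ (T : Z →L[ℝ] Z) (v : Z × W × ℝ), L T v = (T v.1, 0, 0) := by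
    intro T v
    simp [hL, ContinuousLinearMap.compL]
    rfl
  -- the constant part
  set C : (Z × W × ℝ) →L[ℝ] (Z × W × ℝ) :=
    (ContinuousLinearMap.inr ℝ Z (W × ℝ)).comp
      ((((-Dsq).comp (ContinuousLinearMap.fst ℝ W ℝ)).prod 0).comp
        (ContinuousLinearMap.snd ℝ Z (W × ℝ))) with hC
  have hCapp : ∀ v : Z × W × ℝ, C v = (0, -(Dsq v.2.1), 0) := by
    intro v
    simp [hC]
  have hJG' : JG = fun x => C + L (JA x.1) := by
    funext x
    refine ContinuousLinearMap.ext fun v => ?_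
    rw [hJG x v, ContinuousLinearMap.add_apply, hCapp, hLapp, Prod.mk_add_mk, Prod.mk_add_mk]
    simp only [zero_add, add_zero]
  -- fderiv of JG
  have hdJA : HasFDerivAt JA (fderiv ℝ JA y.1) y.1 :=
    ((hJAsmooth.differentiable one_ne_zero) y.1).hasFDerivAt
  have hder : HasFDerivAt JG
      (L.comp ((fderiv ℝ JA y.1).comp (ContinuousLinearMap.fst ℝ Z (W × ℝ)))) y := by
    rw [hJG']
    exact (L.hasFDerivAt.comp y (hdJA.comp y (hasFDerivAt_fst))).const_add C
  have hfd : fderiv ℝ JG y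
      = L.comp ((fderiv ℝ JA y.1).comp (ContinuousLinearMap.fst ℝ Z (W × ℝ))) :=
    hder.fderiv
  constructor
  · -- skew-adjointness
    intro u v
    rw [hJG y u, hJG y v]
    have h1 : ⟪JA y.1 u.1, v.1⟫ = -⟪u.1, JA y.1 v.1⟫ := by
      rw [← ContinuousLinearMap.adjoint_inner_right (JA y.1), hJAskew]
      simp
    have h2 : ⟪-(Dsq u.2.1), v.2.1⟫ = -⟪u.2.1, -(Dsq v.2.1)⟫ := by
      have : ⟪Dsq u.2.1, v.2.1⟫ = -⟪u.2.1, Dsq v.2.1⟫ := by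
        simp only [hDsq, ContinuousLinearMap.smul_apply, ContinuousLinearMap.sub_apply,
          inner_smul_left, inner_smul_right, inner_sub_left, inner_sub_right, conj_trivial]
        rw [ContinuousLinearMap.adjoint_inner_left, ← ContinuousLinearMap.adjoint_inner_right D]
        ring
      simp only [inner_neg_left, inner_neg_right, this]
    simp only [h1, h2]
    ring
  · -- Jacobi identity
    intro μ₁ μ₂ μ₃
    have key : ∀ a b : Z × W × ℝ, (fderiv ℝ JG y (JG y a)) b
        = ((fderiv ℝ JA y.1 (JA y.1 a.1)) b.1, 0, 0) := by
      intro a b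
      rw [hfd]
      simp only [ContinuousLinearMap.comp_apply, ContinuousLinearMap.coe_fst']
      rw [hJG y a]
      exact hLapp _ _
    simp only [key, inner_zero_right, mul_zero, add_zero]
    exact hJacobiA y.1 μ₁.1 μ₂.1 μ₃.1
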